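/- Bound on supremum of function values along a gradient descent segment: let f be (H0, H1)-smooth, w ∈ ℝ^d with ∇f(w) ≠ 0, u = ∇f(w)/‖∇f(w)‖, and y = w − η u with 0 < η < √(2/H1). Then M_f := sup_{z ∈ [w,y]} (f(z) − f*) satisfies M_f ≤ (f(w) − f* + H0η²/2) / (1 − H1η²/2). -/

import Mathlib

set_option maxHeartbeats 1000000 in

/-- Bound on the supremum of function values along a normalized gradient descent segment. -/
theorem stmt_5 {d : ℕ} (f : EuclideanSpace ℝ (Fin d) → ℝ)
    (H0 H1 fstar η : ℝ) (w : EuclideanSpace ℝ (Fin d))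
    (hH0 : 0 ≤ H0) (hH1 : 0 < H1)
    (hf : ContDiff ℝ 2 f) (hfstar : IsGLB (Set.range f) fstar)
    (hs : ∀ z, ‖iteratedFDeriv ℝ 2 f z‖ ≤ H0 + H1 * (f z - fstar))
    (hgrad : gradient f w ≠ 0)
    (hη0 : 0 < η) (hη : η < Real.sqrt (2 / H1)) :
    ∀ t ∈ Set.Icc (0:ℝ) η,
      f (w - t • (‖gradient f w‖⁻¹ • gradient f w)) - fstar ≤
        (f w - fstar + H0 * η ^ 2 / 2) / (1 - H1 * η ^ 2 / 2) := by
  intro t ht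
  have hfd : Differentiable ℝ f := hf.differentiable (by norm_num)
  set u : EuclideanSpace ℝ (Fin d) := ‖gradient f w‖⁻¹ • gradient f w with hu
  have hnu : ‖u‖ = 1 := by
    rw [hu, norm_smul, norm_inv, norm_norm, inv_mul_cancel₀ (norm_ne_zero_iff.2 hgrad)]
  set L : ℝ → EuclideanSpace ℝ (Fin d) := fun s => w - s • u with hL
  have hLcont : Continuous L := by fun_prop
  have hL0 : L 0 = w := by simp [hL]
  have hLd : ∀ s : ℝ, HasDerivAt L (-u) s := by
    intro s
    have h1 : HasDerivAt (fun s : ℝ => s • u) u s := by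
      simpa using (hasDerivAt_id s).smul_const u
    have h2 := (hasDerivAt_const s w).sub h1
    rw [zero_sub] at h2
    exact h2
  have hf1 : ContDiff ℝ 1 (fderiv ℝ f) := hf.fderiv_right (by norm_num)
  set φ : ℝ → ℝ := fun s => fderiv ℝ f (L s) (-u) with hφ
  set ψ : ℝ → ℝ := fun s => fderiv ℝ (fderiv ℝ f) (L s) (-u) (-u) with hψdef
  have hgd : ∀ s : ℝ, HasDerivAt (fun s => f (L s)) (φ s) s := fun s =>
    (hfd (L s)).hasFDerivAt.comp_hasDerivAt s (hLd s)
  have hφd : ∀ s : ℝ, HasDerivAt φ (ψ s) s := by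
    intro s
    have h1 : HasDerivAt (fun s => fderiv ℝ f (L s)) (fderiv ℝ (fderiv ℝ f) (L s) (-u)) s :=
      (hf1.differentiable one_ne_zero (L s)).hasFDerivAt.comp_hasDerivAt s (hLd s)
    exact (ContinuousLinearMap.apply ℝ ℝ (-u)).hasFDerivAt.comp_hasDerivAt s h1
  have hφcont : Continuous φ :=
    (ContinuousLinearMap.apply ℝ ℝ (-u)).continuous.comp (hf1.continuous.comp hLcont)
  have hf2 : Continuous (fderiv ℝ (fderiv ℝ f)) := (hf.fderiv_right (le_refl 2) : ContDiff ℝ 1 (fderiv ℝ f)).continuous_fderiv (by norm_num)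
  have hψcont : Continuous ψ := by
    have : Continuous (fun s => fderiv ℝ (fderiv ℝ f) (L s) (-u)) :=
      (ContinuousLinearMap.apply ℝ _ (-u)).continuous.comp (hf2.comp hLcont)
    exact (ContinuousLinearMap.apply ℝ ℝ (-u)).continuous.comp this
  -- max point on [0, η]
  obtain ⟨ts, hts, htsmax⟩ := isCompact_Icc.exists_isMaxOn (Set.nonempty_Icc.2 hη0.le)
    ((hf.continuous.comp hLcont).continuousOn : ContinuousOn (fun s => f (L s)) (Set.Icc 0 η))
  set M := f (L ts) - fstar with hM
  have hMmax : ∀ s ∈ Set.Icc (0:ℝ) η, f (L s) - fstar ≤ M := fun s hsmem =>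
    sub_le_sub_right (htsmax hsmem) _
  have hA : 0 ≤ f w - fstar := sub_nonneg.2 (hfstar.1 (Set.mem_range_self w))
  have hMnn : 0 ≤ M := le_trans hA (by simpa [hL0] using hMmax 0 ⟨le_rfl, hη0.le⟩)
  set C := H0 + H1 * M with hC
  have hC0 : 0 ≤ C := by positivity
  -- second derivative bound
  have hψb : ∀ s ∈ Set.Icc (0:ℝ) η, |ψ s| ≤ C := by
    intro s hsm
    have h1 : ψ s = iteratedFDeriv ℝ 2 f (L s) ![-u, -u] := by
      rw [iteratedFDeriv_two_apply]
      simp [hψdef]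
    have h2 := (iteratedFDeriv ℝ 2 f (L s)).le_opNorm ![-u, -u]
    have h3 : |ψ s| ≤ ‖iteratedFDeriv ℝ 2 f (L s)‖ := by
      rw [h1]
      calc |iteratedFDeriv ℝ 2 f (L s) ![-u, -u]| = ‖iteratedFDeriv ℝ 2 f (L s) ![-u, -u]‖ := rfl
        _ ≤ ‖iteratedFDeriv ℝ 2 f (L s)‖ * ∏ i, ‖(![-u, -u] : Fin 2 → _) i‖ := h2
        _ = ‖iteratedFDeriv ℝ 2 f (L s)‖ := by
            simp [Fin.prod_univ_two, hnu]
    refine h3.trans ((hs (L s)).trans ?_)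
    have := hMmax s hsm
    nlinarith [hH1]
  -- bound on φ via FTC
  have hφb : ∀ s ∈ Set.Icc (0:ℝ) η, φ s ≤ φ 0 + C * s := by
    intro s hsm
    have hint : φ s - φ 0 = ∫ r in (0:ℝ)..s, ψ r :=
      (intervalIntegral.integral_eq_sub_of_hasDerivAt (fun r _ => hφd r)
        (hψcont.intervalIntegrable 0 s)).symm
    have hb : ‖∫ r in (0:ℝ)..s, ψ r‖ ≤ C * |s - 0| := by
      apply intervalIntegral.norm_integral_le_of_norm_le_const
      intro r hr
      rw [Set.uIoc_of_le hsm.1] at hr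
      simpa [Real.norm_eq_abs] using hψb r ⟨hr.1.le, hr.2.trans hsm.2⟩
    rw [← hint] at hb
    have h2 : φ s - φ 0 ≤ C * s := by
      refine (le_abs_self _).trans ?_
      calc |φ s - φ 0| = ‖φ s - φ 0‖ := rfl
        _ ≤ C * |s - 0| := hb
        _ = C * s := by rw [sub_zero, abs_of_nonneg hsm.1]
    linarith
  -- FTC for f ∘ L over [0, ts]
  have hgint : f (L ts) - f (L 0) = ∫ s in (0:ℝ)..ts, φ s :=
    (intervalIntegral.integral_eq_sub_of_hasDerivAt (fun s _ => hgd s)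
      (hφcont.intervalIntegrable 0 ts)).symm
  have i1 : IntervalIntegrable (fun _ : ℝ => φ 0) MeasureTheory.volume 0 ts :=
    intervalIntegrable_const
  have i2 : IntervalIntegrable (fun s : ℝ => C * s) MeasureTheory.volume 0 ts :=
    Continuous.intervalIntegrable (by fun_prop) 0 ts
  have hmono : ∫ s in (0:ℝ)..ts, φ s ≤ ∫ s in (0:ℝ)..ts, (φ 0 + C * s) := by
    apply intervalIntegral.integral_mono_on hts.1 (hφcont.intervalIntegrable 0 ts) (i1.add i2)
    intro s hsm
    exact hφb s ⟨hsm.1, hsm.2.trans hts.2⟩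
  have hval : ∫ s in (0:ℝ)..ts, (φ 0 + C * s) = φ 0 * ts + C * (ts ^ 2 / 2) := by
    rw [intervalIntegral.integral_add i1 i2, intervalIntegral.integral_const,
      intervalIntegral.integral_const_mul, integral_id]
    simp [smul_eq_mul]
    ring
  -- φ 0 ≤ 0
  have hφ0le : φ 0 ≤ 0 := by
    have hgw : fderiv ℝ f w =
        (InnerProductSpace.toDual ℝ (EuclideanSpace ℝ (Fin d))) (gradient f w) :=
      (hasGradientAt_iff_hasFDerivAt.1 (hfd w).hasGradientAt).fderiv
    have hval0 : φ 0 = -(‖gradient f w‖⁻¹ * ‖gradient f w‖ ^ 2) := by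
      show fderiv ℝ f (L 0) (-u) = _
      rw [hL0, hgw, InnerProductSpace.toDual_apply_apply, hu, inner_neg_right,
        real_inner_smul_right, real_inner_self_eq_norm_sq]
    rw [hval0]
    have : 0 ≤ ‖gradient f w‖⁻¹ * ‖gradient f w‖ ^ 2 := by positivity
    linarith
  -- combine
  have hMle : M ≤ (f w - fstar) + C * (η ^ 2 / 2) := by
    have h1 : f (L ts) ≤ f (L 0) + φ 0 * ts + C * (ts ^ 2 / 2) := by
      have := hmono.trans_eq hval
      linarith [hgint]
    rw [hL0] at h1
    have h2 : φ 0 * ts ≤ 0 := mul_nonpos_of_nonpos_of_nonneg hφ0le hts.1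
    have h3 : ts ^ 2 ≤ η ^ 2 := by nlinarith [hts.1, hts.2]
    have h4 : C * (ts ^ 2 / 2) ≤ C * (η ^ 2 / 2) := by nlinarith
    rw [hM]
    linarith
  have hden : 0 < 1 - H1 * η ^ 2 / 2 := by
    have hsq : η ^ 2 < 2 / H1 := (Real.lt_sqrt hη0.le).1 hη
    have : H1 * η ^ 2 < 2 := by
      rw [lt_div_iff₀ hH1] at hsq
      linarith
    linarith
  have hfinal : M ≤ (f w - fstar + H0 * η ^ 2 / 2) / (1 - H1 * η ^ 2 / 2) := by
    rw [le_div_iff₀ hden]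
    rw [hC] at hMle
    nlinarith [hMle]
  calc f (w - t • u) - fstar = f (L t) - fstar := rfl
    _ ≤ M := hMmax t ht
    _ ≤ _ := hfinal
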